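/- Let k be an algebraically closed field and n ≥ 1. Let f, g ∈ k[x₁,…,xₙ] be polynomials and set F := w·g + f ∈ k[x₁,…,xₙ,w]. Assume that for every point q ∈ kⁿ with f(q) = g(q) = 0, the 2×n Jacobian matrix with rows (∂f/∂x₁(q),…,∂f/∂xₙ(q)) and (∂g/∂x₁(q),…,∂g/∂xₙ(q)) has rank 2. Then the hypersurface F = 0 in affine (n+1)-space is nonsingular: for every (q,β) ∈ kⁿ × k with F(q,β) = 0, at least one of the partial derivatives ∂F/∂x₁,…,∂F/∂xₙ, ∂F/∂w is nonzero at (q,β). -/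

import Mathlib

open MvPolynomial

lemma pderiv_inr_rename_inl {k : Type*} [Field k] {n : ℕ}
    (p : MvPolynomial (Fin n) k) :
    pderiv (Sum.inr () : Fin n ⊕ Unit) (rename Sum.inl p) = 0 := by
  apply pderiv_eq_zero_of_notMem_vars
  intro h
  obtain ⟨j, -, hj⟩ := mem_vars_rename _ _ h
  exact Sum.inl_ne_inr hj

/-- Lemma 3.7: if the affine complete intersection `f = g = 0` is nonsingular
(the 2×n Jacobian has rank 2 at every common zero), then the hypersurface
`F = w·g + f = 0` in affine (n+1)-space is nonsingular. -/
theorem hypersurface_wg_add_f_nonsingular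
    {k : Type*} [Field k] [IsAlgClosed k] {n : ℕ} (hn : 1 ≤ n)
    (f g : MvPolynomial (Fin n) k)
    (F : MvPolynomial (Fin n ⊕ Unit) k)
    (hF : F = X (Sum.inr ()) * rename Sum.inl g + rename Sum.inl f)
    (hJ : ∀ q : Fin n → k, eval q f = 0 → eval q g = 0 →
      (Matrix.of fun r : Fin 2 => fun i : Fin n =>
        if r = 0 then eval q (pderiv i f) else eval q (pderiv i g)).rank = 2) :
    ∀ (q : Fin n → k) (β : k),
      eval (Sum.elim q fun _ : Unit => β) F = 0 →
      ∃ v : Fin n ⊕ Unit, eval (Sum.elim q fun _ : Unit => β) (pderiv v F) ≠ 0 := by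
  intro q β hFq
  by_contra hcon
  push_neg at hcon
  set e : Fin n ⊕ Unit → k := Sum.elim q fun _ : Unit => β with he
  have hqg : (e ∘ Sum.inl) = q := by funext i; simp [he]
  -- ∂F/∂w = g
  have hg : eval q g = 0 := by
    have := hcon (Sum.inr ())
    rw [hF] at this
    simpa [pderiv_inr_rename_inl, eval_rename, hqg] using this
  -- F(q,β) = β g(q) + f(q)
  have hf : eval q f = 0 := by
    rw [hF] at hFq
    simpa [eval_rename, hqg, hg, he] using hFq
  -- ∂F/∂xᵢ = w ∂g/∂xᵢ + ∂f/∂xᵢ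
  have hi : ∀ i : Fin n, eval q (pderiv i f) = -β * eval q (pderiv i g) := by
    intro i
    have := hcon (Sum.inl i)
    rw [hF] at this
    have hinj : Function.Injective (Sum.inl : Fin n → Fin n ⊕ Unit) := Sum.inl_injective
    simp only [map_add, Derivation.leibniz, pderiv_X, Pi.single_eq_of_ne (by simp : Sum.inl i ≠ Sum.inr ()),
      pderiv_rename hinj, smul_eq_mul, zero_mul, zero_add, map_mul, eval_X, map_smul,
      eval_rename, hqg] at this
    have : β * eval q (pderiv i g) + eval q (pderiv i f) = 0 := by
      simpa [he, smul_eq_mul] using this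
    linear_combination this
  -- contradiction with rank 2
  have hrank := hJ q hf hg
  set M : Matrix (Fin 2) (Fin n) k := Matrix.of fun r : Fin 2 => fun i : Fin n =>
        if r = 0 then eval q (pderiv i f) else eval q (pderiv i g) with hM
  have hle : M.rank ≤ 1 := by
    rw [Matrix.rank_eq_finrank_span_row]
    have hsub : Submodule.span k (Set.range M) ≤ Submodule.span k {M 1} := by
      rw [Submodule.span_le]
      rintro _ ⟨r, rfl⟩
      fin_cases r
      · have : M 0 = (-β) • M 1 := by
          funext i
          simp [hM, hi i]
        rw [show M ⟨0, by norm_num⟩ = M 0 from rfl, this]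
        exact Submodule.smul_mem _ _ (Submodule.mem_span_singleton_self _)
      · exact Submodule.mem_span_singleton_self _
    calc Module.finrank k ↥(Submodule.span k (Set.range M))
        ≤ Module.finrank k ↥(Submodule.span k {M 1}) := Submodule.finrank_mono hsub
      _ ≤ 1 := by
          rcases eq_or_ne (M 1) 0 with h0 | h0
          · rw [h0, Submodule.span_zero_singleton]; simp
          · rw [finrank_span_singleton h0]
  omega
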